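/- For any distinct integers a and b, the distance in the hexagonal grid between the horizontal lines L_a and L_b equals 2|a−b|−1. -/

import Mathlib

/-- The hexagonal grid in its brick wall representation: vertex set ℤ×ℤ,
with (x,y) adjacent to (x±1,y) always, and to (x,y+1) if x+y is even
(equivalently, to (x,y-1) if x+y is odd). -/
def hexGraph : SimpleGraph (ℤ × ℤ) where
  Adj u v := (u.2 = v.2 ∧ (u.1 = v.1 + 1 ∨ v.1 = u.1 + 1)) ∨
    (u.1 = v.1 ∧ ((v.2 = u.2 + 1 ∧ Even (u.1 + u.2)) ∨ (u.2 = v.2 + 1 ∧ Even (v.1 + v.2))))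
  symm := by
    constructor
    rintro u v (⟨h1, h2 | h2⟩ | ⟨h1, ⟨h2, h3⟩ | ⟨h2, h3⟩⟩)
    · exact Or.inl ⟨h1.symm, Or.inr h2⟩
    · exact Or.inl ⟨h1.symm, Or.inl h2⟩
    · exact Or.inr ⟨h1.symm, Or.inr ⟨h2, h3⟩⟩
    · exact Or.inr ⟨h1.symm, Or.inl ⟨h2, h3⟩⟩
  loopless := by constructor; rintro ⟨x, y⟩ (⟨_, h | h⟩ | ⟨_, ⟨h, _⟩ | ⟨h, _⟩⟩) <;> omega

/-- The graph distance from a vertex to the horizontal line L_k = {(x,k) : x ∈ ℤ}. -/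
noncomputable def hexLineDist (u : ℤ × ℤ) (k : ℤ) : ℕ :=
  sInf {n : ℕ | ∃ x : ℤ, hexGraph.dist u (x, k) = n}

lemma hex_adj_right (x y : ℤ) : hexGraph.Adj (x, y) (x + 1, y) :=
  Or.inl ⟨rfl, Or.inr rfl⟩

lemma hex_adj_up (x y : ℤ) (h : Even (x + y)) : hexGraph.Adj (x, y) (x, y + 1) :=
  Or.inr ⟨rfl, Or.inl ⟨rfl, h⟩⟩

/-- Potential function: 1-Lipschitz along edges. -/
def hexPot (p : ℤ × ℤ) : ℤ := 2 * p.2 - (p.1 + p.2) % 2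

lemma hexPot_adj {u v : ℤ × ℤ} (h : hexGraph.Adj u v) : |hexPot u - hexPot v| ≤ 1 := by
  obtain ⟨x, y⟩ := u; obtain ⟨x', y'⟩ := v
  simp only [hexPot]
  rcases h with ⟨h1, h2 | h2⟩ | ⟨h1, ⟨h2, h3⟩ | ⟨h2, h3⟩⟩ <;>
    simp only [Int.even_iff] at * <;>
    rw [abs_le] <;> constructor <;> omega

lemma hexPot_walk {u v : ℤ × ℤ} (w : hexGraph.Walk u v) :
    |hexPot u - hexPot v| ≤ (w.length : ℤ) := by
  induction w with
  | nil => simp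
  | cons h w ih =>
    rename_i a b c
    calc |hexPot a - hexPot c| ≤ |hexPot a - hexPot b| + |hexPot b - hexPot c| :=
          abs_sub_le _ _ _
      _ ≤ 1 + w.length := add_le_add (hexPot_adj h) ih
      _ ≤ _ := by simp [SimpleGraph.Walk.length_cons]; omega

lemma hex_reach_right (n : ℕ) (x y : ℤ) : hexGraph.Reachable (x, y) (x + n, y) := by
  induction n with
  | zero => simpa using SimpleGraph.Reachable.refl ((x : ℤ), y)
  | succ n ih =>
    refine ih.trans ((hex_adj_right (x + n) y).reachable.trans ?_)
    rw [show ((x + n) + 1 : ℤ) = x + (n + 1 : ℕ) by push_cast; ring]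

lemma hex_reach_horiz (x x' y : ℤ) : hexGraph.Reachable (x, y) (x', y) := by
  rcases le_total x x' with h | h
  · have := hex_reach_right (x' - x).toNat x y
    rwa [Int.toNat_of_nonneg (by omega), show x + (x' - x) = x' by ring] at this
  · have := hex_reach_right (x - x').toNat x' y
    rw [Int.toNat_of_nonneg (by omega), show x' + (x - x') = x by ring] at this
    exact this.symm

lemma hex_reach_up (x y : ℤ) : ∃ x', hexGraph.Reachable (x, y) (x', y + 1) := by
  rcases Int.even_or_odd (x + y) with h | h
  · exact ⟨x, (hex_adj_up x y h).reachable⟩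
  · refine ⟨x + 1, (hex_adj_right x y).reachable.trans (hex_adj_up (x + 1) y ?_).reachable⟩
    rcases h with ⟨k, hk⟩; exact ⟨k + 1, by omega⟩

lemma hex_reach_up_n (n : ℕ) (x y : ℤ) : ∃ x', hexGraph.Reachable (x, y) (x', y + n) := by
  induction n with
  | zero => exact ⟨x, by simpa using SimpleGraph.Reachable.refl ((x : ℤ), y)⟩
  | succ n ih =>
    obtain ⟨x', h⟩ := ih
    obtain ⟨x'', h'⟩ := hex_reach_up x' (y + n)
    refine ⟨x'', ?_⟩
    rw [show (y + (n + 1 : ℕ) : ℤ) = y + n + 1 by push_cast; ring]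
    exact h.trans h'

lemma hex_reach_all (u v : ℤ × ℤ) : hexGraph.Reachable u v := by
  obtain ⟨x, y⟩ := u; obtain ⟨x', y'⟩ := v
  have key : ∀ (p q r s : ℤ), r ≤ s → hexGraph.Reachable (p, r) (q, s) := by
    intro p q r s hrs
    obtain ⟨x'', h⟩ := hex_reach_up_n (s - r).toNat p r
    rw [Int.toNat_of_nonneg (by omega), show r + (s - r) = s by ring] at h
    exact h.trans (hex_reach_horiz x'' q s)
  rcases le_total y y' with h | h
  · exact key x x' y y' h
  · exact (key x' x y' y h).symm

/-- Explicit short walk climbing `n+1` levels with length `2n+1`. -/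
lemma hex_walk_up (a : ℤ) (n : ℕ) :
    ∃ w : hexGraph.Walk (a, a) (a + n, a + (n + 1)), w.length = 2 * n + 1 := by
  induction n with
  | zero =>
    have hc : ((a : ℤ), (a + 1 : ℤ)) = ((a + (0:ℕ) : ℤ), (a + ((0:ℕ)+1) : ℤ)) := by
      push_cast; ring_nf
    exact ⟨(SimpleGraph.Walk.cons (hex_adj_up a a ⟨a, by ring⟩)
      SimpleGraph.Walk.nil).copy rfl hc, by simp⟩
  | succ n ih =>
    obtain ⟨w, hw⟩ := ih
    have e1 : hexGraph.Adj (a + n, a + (n + 1)) (a + n + 1, a + (n + 1)) :=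
      hex_adj_right _ _
    have e2 : hexGraph.Adj (a + n + 1, a + (n + 1)) (a + n + 1, a + (n + 1) + 1) :=
      hex_adj_up _ _ ⟨a + n + 1, by push_cast; ring⟩
    have hcast : ((a + n + 1 : ℤ), (a + (n + 1) + 1 : ℤ)) =
        ((a + (n + 1 : ℕ) : ℤ), (a + ((n + 1 : ℕ) + 1) : ℤ)) := by push_cast; ring_nf
    refine ⟨((w.concat e1).concat e2).copy rfl hcast, ?_⟩
    simp [SimpleGraph.Walk.length_concat, hw]; omega

lemma hex_pair_dist_ge (a b : ℤ) (hab : a ≠ b) (x y : ℤ) :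
    2 * |a - b| - 1 ≤ (hexGraph.dist (x, a) (y, b) : ℤ) := by
  obtain ⟨w, hw⟩ := (hex_reach_all ((x, a)) ((y, b))).exists_walk_length_eq_dist
  have := hexPot_walk w
  rw [hw] at this
  have h1 : |hexPot (x, a) - hexPot (y, b)| ≥ 2 * |a - b| - 1 := by
    simp only [hexPot]
    have := Int.emod_emod_of_dvd (x + a) (dvd_refl 2)
    rcases abs_cases (a - b) with ⟨h, _⟩ | ⟨h, _⟩ <;>
      rcases abs_cases (2 * a - (x + a) % 2 - (2 * b - (y + b) % 2)) with ⟨h', _⟩ | ⟨h', _⟩ <;>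
      omega
  omega

lemma hex_pair_dist_exact (a b : ℤ) (hlt : a < b) :
    hexGraph.dist (a, a) (a + (b - a - 1), b) = (2 * (b - a) - 1).toNat := by
  set n : ℕ := (b - a - 1).toNat with hn
  have hb : (b : ℤ) = a + (n : ℤ) + 1 := by simp [hn]; omega
  have hx : (a + (b - a - 1) : ℤ) = a + (n : ℤ) := by simp [hn]; omega
  have hcoord : ((a + (b - a - 1) : ℤ), b) = ((a + (n:ℤ)), a + ((n:ℤ) + 1)) := by
    rw [hx, hb, add_assoc]
  rw [hcoord]
  obtain ⟨w, hw⟩ := hex_walk_up a n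
  have hub : hexGraph.dist (a, a) (a + (n:ℤ), a + ((n:ℤ) + 1)) ≤ 2 * n + 1 :=
    hw ▸ SimpleGraph.dist_le w
  have hlb := hex_pair_dist_ge a b (by omega) a (a + n)
  rw [show ((a + (n:ℤ)), b) = ((a + (n:ℤ)), a + ((n:ℤ) + 1)) by rw [hb, add_assoc]] at hlb
  have habs : |a - b| = b - a := by rw [abs_sub_comm]; exact abs_of_pos (by omega)
  omega

/-- the distance between the horizontal lines L_a and L_b, a ≠ b,
is 2|a−b|−1. -/
theorem hex_line_line_dist (a b : ℤ) (hab : a ≠ b) :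
    ((sInf {n : ℕ | ∃ x y : ℤ, hexGraph.dist (x, a) (y, b) = n} : ℕ) : ℤ)
      = 2 * |a - b| - 1 := by
  have main : ∀ a b : ℤ, a < b →
      ((sInf {n : ℕ | ∃ x y : ℤ, hexGraph.dist (x, a) (y, b) = n} : ℕ) : ℤ)
        = 2 * |a - b| - 1 := by
    intro a b hlt
    have hmem : (2 * (b - a) - 1).toNat ∈
        {n : ℕ | ∃ x y : ℤ, hexGraph.dist (x, a) (y, b) = n} :=
      ⟨a, a + (b - a - 1), hex_pair_dist_exact a b hlt⟩
    have hle := Nat.sInf_le hmem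
    have hge : ∀ n ∈ {n : ℕ | ∃ x y : ℤ, hexGraph.dist (x, a) (y, b) = n},
        (2 * (b - a) - 1).toNat ≤ n := by
      rintro n ⟨x, y, rfl⟩
      have := hex_pair_dist_ge a b (by omega) x y
      rcases abs_cases (a - b) with ⟨h, _⟩ | ⟨h, _⟩ <;> omega
    have := le_antisymm hle (le_csInf ⟨_, hmem⟩ hge)
    rw [this]
    rcases abs_cases (a - b) with ⟨h, _⟩ | ⟨h, _⟩ <;> omega
  rcases lt_or_gt_of_ne hab with h | h
  · exact main a b h
  · have hset : {n : ℕ | ∃ x y : ℤ, hexGraph.dist (x, a) (y, b) = n} =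
        {n : ℕ | ∃ x y : ℤ, hexGraph.dist (x, b) (y, a) = n} := by
      ext n
      constructor <;> rintro ⟨x, y, rfl⟩ <;> exact ⟨y, x, SimpleGraph.dist_comm⟩
    rw [hset, main b a h, abs_sub_comm]
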